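/- Let Ω ⊆ ℝ^m be open, and let u and u_j (j ∈ ℕ) be real-valued C² functions on Ω with Δu ≥ 0 and Δu_j ≥ 0 on Ω for all j, where Δ denotes the Laplacian (the sum of the second partial derivatives). If u_j → u uniformly on every compact subset of Ω, then u_j → u in W^{1,2}_loc(Ω); in particular, for every compact C ⊆ Ω, ∫_C |∇u_j − ∇u|² dx → 0 as j → ∞. -/

import Mathlib

open MeasureTheory Filter Topology

noncomputable section

variable (m : ℕ)

/-- The `i`-th partial derivative of `v : ℝ^m → ℝ`. -/
def pderiv (v : (Fin m → ℝ) → ℝ) (i : Fin m) (x : Fin m → ℝ) : ℝ :=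
  fderiv ℝ v x (Pi.single i 1)

/-- The Laplacian of `v : ℝ^m → ℝ` (the sum of the second partial derivatives). -/
def lap (v : (Fin m → ℝ) → ℝ) (x : Fin m → ℝ) : ℝ :=
  ∑ i, fderiv ℝ (fun y => fderiv ℝ v y (Pi.single i 1)) x (Pi.single i 1)

section Helpers

open Set
open scoped ContDiff


lemma integral_div_eq_zero {d : ℕ} (F : Fin d → (Fin d → ℝ) → ℝ)
    (hF : ∀ i, Differentiable ℝ (F i))
    {K : Set (Fin d → ℝ)} (hK : IsCompact K)
    (hFK : ∀ i x, x ∉ K → F i x = 0)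
    (hcont : Continuous fun x => ∑ i, fderiv ℝ (F i) x (Pi.single i 1)) :
    ∫ x, ∑ i, fderiv ℝ (F i) x (Pi.single i 1) = 0 := by
  have hKc : IsClosed K := hK.isClosed
  have hD0 : ∀ x ∉ K, (∑ i, fderiv ℝ (F i) x (Pi.single i 1)) = 0 := by
    intro x hx
    have hzero : ∀ i, fderiv ℝ (F i) x = 0 := by
      intro i
      have hev : F i =ᶠ[nhds x] (fun _ => 0) := by
        filter_upwards [hKc.isOpen_compl.mem_nhds hx] with y hy
        exact hFK i y hy
      rw [Filter.EventuallyEq.fderiv_eq hev, fderiv_fun_const]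
      rfl
    simp [hzero]
  match d with
  | 0 => simp
  | n + 1 =>
    obtain ⟨R, hR⟩ := hK.isBounded.subset_closedBall 0
    set a : Fin (n+1) → ℝ := fun _ => -(|R| + 1)
    set b : Fin (n+1) → ℝ := fun _ => |R| + 1
    have hle : a ≤ b := by
      intro i
      simp only [a, b]
      linarith [abs_nonneg R]
    have hKb : ∀ x ∈ K, ∀ i, |x i| ≤ |R| := by
      intro x hx i
      have h1 : ‖x‖ ≤ R := by simpa [Metric.mem_closedBall] using hR hx
      have h2 : ‖x i‖ ≤ ‖x‖ := norm_le_pi_norm x i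
      calc |x i| ≤ ‖x‖ := h2
        _ ≤ R := h1
        _ ≤ |R| := le_abs_self R
    have key := MeasureTheory.integral_divergence_of_hasFDerivAt_off_countable'
      a b hle F (fun i x => fderiv ℝ (F i) x) ∅ countable_empty
      (fun i => ((hF i).continuous).continuousOn)
      (fun x _ i => ((hF i) x).hasFDerivAt)
      (hcont.integrable_of_hasCompactSupport
        (HasCompactSupport.intro hK hD0)).integrableOn
    have hfaces : ∀ i : Fin (n+1), ∀ (c : ℝ), |c| = |R| + 1 →
        ∀ y : Fin n → ℝ, F i (i.insertNth c y) = 0 := by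
      intro i c hc y
      apply hFK
      intro hmem
      have := hKb _ hmem i
      rw [Fin.insertNth_apply_same] at this
      rw [hc] at this
      linarith
    have hrhs : ∀ i : Fin (n+1),
        ((∫ x in Icc (a ∘ i.succAbove) (b ∘ i.succAbove), F i (i.insertNth (b i) x)) -
          ∫ x in Icc (a ∘ i.succAbove) (b ∘ i.succAbove), F i (i.insertNth (a i) x)) = 0 := by
      intro i
      have h1 : ∀ y : Fin n → ℝ, F i (i.insertNth (b i) y) = 0 := by
        intro y; apply hfaces i (b i) _ y
        show |(|R| + 1)| = |R| + 1
        rw [abs_of_nonneg (by positivity)]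
      have h2 : ∀ y : Fin n → ℝ, F i (i.insertNth (a i) y) = 0 := by
        intro y; apply hfaces i (a i) _ y
        show |(-(|R| + 1))| = |R| + 1
        rw [abs_neg, abs_of_nonneg (by positivity)]
      simp [h1, h2]
    rw [Finset.sum_eq_zero (fun i _ => hrhs i)] at key
    rw [← key]
    symm
    apply MeasureTheory.setIntegral_eq_integral_of_forall_compl_eq_zero
    intro x hx
    apply hD0
    intro hmem
    apply hx
    rw [mem_Icc]
    constructor <;> intro i <;> [skip; skip] <;>
      · have := hKb x hmem i
        have h1 := abs_le.mp this
        simp only [a, b]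
        cases h1 with
        | intro l r => first | linarith | linarith


def lap' {d : ℕ} (v : (Fin d → ℝ) → ℝ) (x : Fin d → ℝ) : ℝ :=
  ∑ i, fderiv ℝ (fun y => fderiv ℝ v y (Pi.single i 1)) x (Pi.single i 1)

variable {d : ℕ} {Ω : Set (Fin d → ℝ)}

lemma pd_contDiffOn (hΩ : IsOpen Ω) {v : (Fin d → ℝ) → ℝ} (hv : ContDiffOn ℝ 2 v Ω)
    (i : Fin d) :
    ContDiffOn ℝ 1 (fun y => fderiv ℝ v y (Pi.single i 1)) Ω :=
  (hv.fderiv_of_isOpen hΩ (by norm_num)).clm_apply contDiffOn_const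

lemma pd_diffAt (hΩ : IsOpen Ω) {v : (Fin d → ℝ) → ℝ} (hv : ContDiffOn ℝ 2 v Ω)
    (i : Fin d) {x : Fin d → ℝ} (hx : x ∈ Ω) :
    DifferentiableAt ℝ (fun y => fderiv ℝ v y (Pi.single i 1)) x :=
  (((pd_contDiffOn hΩ hv i).differentiableOn one_ne_zero) x hx).differentiableAt
    (hΩ.mem_nhds hx)

lemma v_diffAt (hΩ : IsOpen Ω) {v : (Fin d → ℝ) → ℝ} (hv : ContDiffOn ℝ 2 v Ω)
    {x : Fin d → ℝ} (hx : x ∈ Ω) : DifferentiableAt ℝ v x :=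
  ((hv.differentiableOn (by norm_num)) x hx).differentiableAt (hΩ.mem_nhds hx)

lemma pd2_contOn (hΩ : IsOpen Ω) {v : (Fin d → ℝ) → ℝ} (hv : ContDiffOn ℝ 2 v Ω)
    (i : Fin d) :
    ContinuousOn (fun x => fderiv ℝ (fun y => fderiv ℝ v y (Pi.single i 1)) x
      (Pi.single i 1)) Ω := by
  have h := (pd_contDiffOn hΩ hv i).continuousOn_fderiv_of_isOpen hΩ le_rfl
  exact (ContinuousLinearMap.apply ℝ ℝ ((Pi.single i 1 : Fin d → ℝ))).continuous.comp_continuousOn h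

lemma lap_contOn (hΩ : IsOpen Ω) {v : (Fin d → ℝ) → ℝ} (hv : ContDiffOn ℝ 2 v Ω) :
    ContinuousOn (lap' v) Ω := by
  unfold lap'
  exact continuousOn_finset_sum _ fun i _ => pd2_contOn hΩ hv i

lemma lap_sub (hΩ : IsOpen Ω) {v₁ v₂ : (Fin d → ℝ) → ℝ}
    (h₁ : ContDiffOn ℝ 2 v₁ Ω) (h₂ : ContDiffOn ℝ 2 v₂ Ω) {x : Fin d → ℝ} (hx : x ∈ Ω) :
    lap' (fun y => v₁ y - v₂ y) x = lap' v₁ x - lap' v₂ x := by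
  unfold lap'
  rw [← Finset.sum_sub_distrib]
  refine Finset.sum_congr rfl fun i _ => ?_
  have hev : (fun y => fderiv ℝ (fun z => v₁ z - v₂ z) y (Pi.single i 1))
      =ᶠ[𝓝 x] (fun y => fderiv ℝ v₁ y (Pi.single i 1) - fderiv ℝ v₂ y (Pi.single i 1)) := by
    filter_upwards [hΩ.mem_nhds hx] with y hy
    rw [fderiv_fun_sub (v_diffAt hΩ h₁ hy) (v_diffAt hΩ h₂ hy)]
    simp
  rw [hev.fderiv_eq, fderiv_fun_sub (pd_diffAt hΩ h₁ i hx) (pd_diffAt hΩ h₂ i hx)]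
  simp

lemma hasFDerivAt_F (hΩ : IsOpen Ω) {w η : (Fin d → ℝ) → ℝ}
    (hw : ContDiffOn ℝ 2 w Ω) (hη : ContDiff ℝ ∞ η) {x : Fin d → ℝ} (hx : x ∈ Ω)
    (i : Fin d) :
    HasFDerivAt (fun y => (η y * η y) * (w y * fderiv ℝ w y (Pi.single i 1)))
      ((η x * η x) • ((w x) • (fderiv ℝ (fun y => fderiv ℝ w y (Pi.single i 1)) x)
          + (fderiv ℝ w x (Pi.single i 1)) • (fderiv ℝ w x))
        + (w x * fderiv ℝ w x (Pi.single i 1)) •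
            ((η x) • (fderiv ℝ η x) + (η x) • (fderiv ℝ η x))) x := by
  have h1 : HasFDerivAt η (fderiv ℝ η x) x :=
    (hη.differentiable (by simp) x).hasFDerivAt
  have h2 : HasFDerivAt w (fderiv ℝ w x) x := (v_diffAt hΩ hw hx).hasFDerivAt
  have h3 : HasFDerivAt (fun y => fderiv ℝ w y (Pi.single i 1))
      (fderiv ℝ (fun y => fderiv ℝ w y (Pi.single i 1)) x) x :=
    (pd_diffAt hΩ hw i hx).hasFDerivAt
  exact (h1.mul h1).mul (h2.mul h3)

lemma divF_eq (hΩ : IsOpen Ω) {w η : (Fin d → ℝ) → ℝ}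
    (hw : ContDiffOn ℝ 2 w Ω) (hη : ContDiff ℝ ∞ η) {x : Fin d → ℝ} (hx : x ∈ Ω) :
    ∑ i, fderiv ℝ (fun y => (η y * η y) * (w y * fderiv ℝ w y (Pi.single i 1))) x
        (Pi.single i 1)
      = (η x * η x) * (w x * lap' w x)
        + ((η x * η x) * ∑ i, (fderiv ℝ w x (Pi.single i 1))^2
          + 2 * η x * w x *
            ∑ i, fderiv ℝ η x (Pi.single i 1) * fderiv ℝ w x (Pi.single i 1)) := by
  have hterm : ∀ i : Fin d,
      fderiv ℝ (fun y => (η y * η y) * (w y * fderiv ℝ w y (Pi.single i 1))) x (Pi.single i 1)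
        = η x * η x * (w x * fderiv ℝ (fun y => fderiv ℝ w y (Pi.single i 1)) x (Pi.single i 1))
          + (η x * η x * (fderiv ℝ w x (Pi.single i 1))^2
            + 2 * η x * w x * (fderiv ℝ η x (Pi.single i 1) * fderiv ℝ w x (Pi.single i 1))) := by
    intro i
    rw [(hasFDerivAt_F hΩ hw hη hx i).fderiv]
    simp only [ContinuousLinearMap.add_apply, ContinuousLinearMap.smul_apply, smul_eq_mul]
    ring
  unfold lap'
  calc (∑ i, fderiv ℝ (fun y => (η y * η y) * (w y * fderiv ℝ w y (Pi.single i 1))) x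
      (Pi.single i 1)) = _ := Finset.sum_congr rfl (fun i _ => hterm i)
    _ = _ := by simp only [Finset.sum_add_distrib, ← Finset.mul_sum]

lemma q_contDiff {η : (Fin d → ℝ) → ℝ} (hη : ContDiff ℝ ∞ η) (i : Fin d) :
    ContDiff ℝ ∞ (fun y => fderiv ℝ (fun z => η z * η z) y (Pi.single i 1)) :=
  ((hη.mul hη).fderiv_right (m := ∞) (by simp)).clm_apply contDiff_const

lemma hasFDerivAt_G (hΩ : IsOpen Ω) {w η : (Fin d → ℝ) → ℝ}
    (hw : ContDiffOn ℝ 2 w Ω) (hη : ContDiff ℝ ∞ η) {x : Fin d → ℝ} (hx : x ∈ Ω)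
    (i : Fin d) :
    HasFDerivAt (fun y => (η y * η y) * fderiv ℝ w y (Pi.single i 1)
        - w y * fderiv ℝ (fun z => η z * η z) y (Pi.single i 1))
      (((η x * η x) • (fderiv ℝ (fun y => fderiv ℝ w y (Pi.single i 1)) x)
          + (fderiv ℝ w x (Pi.single i 1)) • ((η x) • (fderiv ℝ η x) + (η x) • (fderiv ℝ η x)))
        - ((w x) • (fderiv ℝ (fun y => fderiv ℝ (fun z => η z * η z) y (Pi.single i 1)) x)
          + (fderiv ℝ (fun z => η z * η z) x (Pi.single i 1)) • (fderiv ℝ w x))) x := by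
  have h1 : HasFDerivAt η (fderiv ℝ η x) x := (hη.differentiable (by simp) x).hasFDerivAt
  have h2 : HasFDerivAt w (fderiv ℝ w x) x := (v_diffAt hΩ hw hx).hasFDerivAt
  have h3 : HasFDerivAt (fun y => fderiv ℝ w y (Pi.single i 1))
      (fderiv ℝ (fun y => fderiv ℝ w y (Pi.single i 1)) x) x :=
    (pd_diffAt hΩ hw i hx).hasFDerivAt
  have h4 : HasFDerivAt (fun y => fderiv ℝ (fun z => η z * η z) y (Pi.single i 1))
      (fderiv ℝ (fun y => fderiv ℝ (fun z => η z * η z) y (Pi.single i 1)) x) x :=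
    ((q_contDiff hη i).differentiable (by simp) x).hasFDerivAt
  exact ((h1.mul h1).mul h3).sub (h2.mul h4)

lemma divG_eq (hΩ : IsOpen Ω) {w η : (Fin d → ℝ) → ℝ}
    (hw : ContDiffOn ℝ 2 w Ω) (hη : ContDiff ℝ ∞ η) {x : Fin d → ℝ} (hx : x ∈ Ω) :
    ∑ i, fderiv ℝ (fun y => (η y * η y) * fderiv ℝ w y (Pi.single i 1)
        - w y * fderiv ℝ (fun z => η z * η z) y (Pi.single i 1)) x (Pi.single i 1)
      = (η x * η x) * lap' w x - w x * lap' (fun z => η z * η z) x := by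
  have h1 : HasFDerivAt η (fderiv ℝ η x) x := (hη.differentiable (by simp) x).hasFDerivAt
  have hq : fderiv ℝ (fun z => η z * η z) x = (η x) • (fderiv ℝ η x) + (η x) • (fderiv ℝ η x) :=
    (h1.mul h1).fderiv
  have hterm : ∀ i : Fin d,
      fderiv ℝ (fun y => (η y * η y) * fderiv ℝ w y (Pi.single i 1)
          - w y * fderiv ℝ (fun z => η z * η z) y (Pi.single i 1)) x (Pi.single i 1)
        = η x * η x * (fderiv ℝ (fun y => fderiv ℝ w y (Pi.single i 1)) x (Pi.single i 1))
          - w x * (fderiv ℝ (fun y => fderiv ℝ (fun z => η z * η z) y (Pi.single i 1)) x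
              (Pi.single i 1)) := by
    intro i
    rw [(hasFDerivAt_G hΩ hw hη hx i).fderiv]
    simp only [ContinuousLinearMap.sub_apply, ContinuousLinearMap.add_apply,
      ContinuousLinearMap.smul_apply, smul_eq_mul, hq]
    ring
  unfold lap'
  calc (∑ i, fderiv ℝ (fun y => (η y * η y) * fderiv ℝ w y (Pi.single i 1)
        - w y * fderiv ℝ (fun z => η z * η z) y (Pi.single i 1)) x (Pi.single i 1))
      = _ := Finset.sum_congr rfl (fun i _ => hterm i)
    _ = _ := by simp only [Finset.sum_sub_distrib, ← Finset.mul_sum]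

lemma integral_div_formula {U : Set (Fin d → ℝ)} (hΩ : IsOpen Ω) (hU : IsOpen U)
    (hcover : ∀ x, x ∈ Ω ∨ x ∈ U)
    {K : Set (Fin d → ℝ)} (hK : IsCompact K) (hKΩ : K ⊆ Ω) (hKU : ∀ x, x ∉ K → x ∈ U)
    (F : Fin d → (Fin d → ℝ) → ℝ) (φ : (Fin d → ℝ) → ℝ)
    (hFU : ∀ i, ∀ x ∈ U, F i x = 0)
    (hdiff : ∀ i, ∀ x ∈ Ω, DifferentiableAt ℝ (F i) x)
    (hφ : ∀ x ∈ Ω, ∑ i, fderiv ℝ (F i) x (Pi.single i 1) = φ x)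
    (hφc : ContinuousOn φ Ω) :
    ∫ x in K, φ x = 0 := by
  have hFU' : ∀ i, ∀ x ∈ U, F i =ᶠ[𝓝 x] (fun _ => 0) := by
    intro i x hx
    filter_upwards [hU.mem_nhds hx] with y hy using hFU i y hy
  have hdiffU : ∀ i, ∀ x ∈ U, DifferentiableAt ℝ (F i) x := by
    intro i x hx
    exact (Filter.EventuallyEq.differentiableAt_iff (hFU' i x hx)).mpr
      (differentiableAt_const 0)
  have hDU : ∀ x ∈ U, ∑ i, fderiv ℝ (F i) x (Pi.single i 1) = 0 := by
    intro x hx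
    have : ∀ i, fderiv ℝ (F i) x = 0 := by
      intro i
      rw [(hFU' i x hx).fderiv_eq, fderiv_fun_const]
      rfl
    simp [this]
  have hdiffall : ∀ i, Differentiable ℝ (F i) := by
    intro i x
    rcases hcover x with h | h
    · exact hdiff i x h
    · exact hdiffU i x h
  have hcont : Continuous fun x => ∑ i, fderiv ℝ (F i) x (Pi.single i 1) := by
    rw [continuous_iff_continuousAt]
    intro x
    rcases hcover x with h | h
    · have hc : ContinuousAt φ x := hφc.continuousAt (hΩ.mem_nhds h)
      apply hc.congr
      filter_upwards [hΩ.mem_nhds h] with y hy using (hφ y hy).symm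
    · have : (fun x => ∑ i, fderiv ℝ (F i) x (Pi.single i 1)) =ᶠ[𝓝 x] (fun _ => 0) := by
        filter_upwards [hU.mem_nhds h] with y hy using hDU y hy
      exact continuousAt_const.congr (by filter_upwards [hU.mem_nhds h] with y hy
        using (hDU y hy).symm)
  have hzero := integral_div_eq_zero F hdiffall hK
    (fun i x hx => hFU i x (hKU x hx)) hcont
  have h1 : ∫ x in K, (∑ i, fderiv ℝ (F i) x (Pi.single i 1)) = 0 := by
    rw [MeasureTheory.setIntegral_eq_integral_of_forall_compl_eq_zero
      (fun x hx => hDU x (hKU x hx))]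
    exact hzero
  rw [← h1]
  apply MeasureTheory.setIntegral_congr_fun hK.measurableSet
  intro x hx
  exact (hφ x (hKΩ hx)).symm

lemma continuous_pdη {η : (Fin d → ℝ) → ℝ} (hη : ContDiff ℝ ∞ η) (i : Fin d) :
    Continuous (fun x => fderiv ℝ η x (Pi.single i 1)) :=
  (ContinuousLinearMap.apply ℝ ℝ ((Pi.single i 1 : Fin d → ℝ))).continuous.comp
    (hη.fderiv_right (m := ∞) (by simp)).continuous

lemma continuous_lap_ηη {η : (Fin d → ℝ) → ℝ} (hη : ContDiff ℝ ∞ η) :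
    Continuous (lap' (fun z => η z * η z)) := by
  unfold lap'
  apply continuous_finset_sum
  intro i _
  exact (ContinuousLinearMap.apply ℝ ℝ ((Pi.single i 1 : Fin d → ℝ))).continuous.comp
    ((q_contDiff hη i).fderiv_right (m := ∞) (by simp)).continuous

lemma IB1 (hΩ : IsOpen Ω) {w η : (Fin d → ℝ) → ℝ} (hw : ContDiffOn ℝ 2 w Ω)
    (hη : ContDiff ℝ ∞ η) {K : Set (Fin d → ℝ)} (hK : IsCompact K) (hKΩ : K ⊆ Ω)
    (hts : tsupport η ⊆ K) :
    ∫ x in K, ((η x * η x) * (w x * lap' w x)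
      + ((η x * η x) * ∑ i, (fderiv ℝ w x (Pi.single i 1))^2
        + 2 * η x * w x * ∑ i, fderiv ℝ η x (Pi.single i 1) * fderiv ℝ w x (Pi.single i 1)))
      = 0 := by
  apply integral_div_formula hΩ (isClosed_tsupport η).isOpen_compl
    (fun x => by
      by_cases h : x ∈ Ω
      · exact Or.inl h
      · exact Or.inr fun hc => h (hKΩ (hts hc)))
    hK hKΩ (fun x hx hc => hx (hts hc))
    (fun i => fun y => (η y * η y) * (w y * fderiv ℝ w y (Pi.single i 1)))
  · intro i x hx
    rw [image_eq_zero_of_notMem_tsupport hx]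
    ring
  · intro i x hx
    exact (hasFDerivAt_F hΩ hw hη hx i).differentiableAt
  · intro x hx
    exact divF_eq hΩ hw hη hx
  · apply ContinuousOn.add
    · exact ((hη.continuous.mul hη.continuous).continuousOn).mul
        ((hw.continuousOn).mul (lap_contOn hΩ hw))
    · apply ContinuousOn.add
      · exact ((hη.continuous.mul hη.continuous).continuousOn).mul
          (continuousOn_finset_sum _ fun i _ =>
            (((pd_contDiffOn hΩ hw i).continuousOn)).pow 2)
      · exact ((((continuous_const.mul hη.continuous).continuousOn).mul
          hw.continuousOn)).mul (continuousOn_finset_sum _ fun i _ =>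
            ((continuous_pdη hη i).continuousOn).mul ((pd_contDiffOn hΩ hw i).continuousOn))

lemma IB2 (hΩ : IsOpen Ω) {w η : (Fin d → ℝ) → ℝ} (hw : ContDiffOn ℝ 2 w Ω)
    (hη : ContDiff ℝ ∞ η) {K : Set (Fin d → ℝ)} (hK : IsCompact K) (hKΩ : K ⊆ Ω)
    (hts : tsupport η ⊆ K) :
    ∫ x in K, ((η x * η x) * lap' w x - w x * lap' (fun z => η z * η z) x) = 0 := by
  apply integral_div_formula hΩ (isClosed_tsupport η).isOpen_compl
    (fun x => by
      by_cases h : x ∈ Ω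
      · exact Or.inl h
      · exact Or.inr fun hc => h (hKΩ (hts hc)))
    hK hKΩ (fun x hx hc => hx (hts hc))
    (fun i => fun y => (η y * η y) * fderiv ℝ w y (Pi.single i 1)
      - w y * fderiv ℝ (fun z => η z * η z) y (Pi.single i 1))
  · intro i x hx
    have h0 : η x = 0 := image_eq_zero_of_notMem_tsupport hx
    have hev : (fun z => η z * η z) =ᶠ[𝓝 x] (fun _ => 0) := by
      filter_upwards [(isClosed_tsupport η).isOpen_compl.mem_nhds hx] with y hy
      rw [image_eq_zero_of_notMem_tsupport hy]; ring
    have : fderiv ℝ (fun z => η z * η z) x = 0 := by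
      rw [hev.fderiv_eq, fderiv_fun_const]; rfl
    rw [h0, this]
    simp
  · intro i x hx
    exact (hasFDerivAt_G hΩ hw hη hx i).differentiableAt
  · intro x hx
    exact divG_eq hΩ hw hη hx
  · apply ContinuousOn.sub
    · exact ((hη.continuous.mul hη.continuous).continuousOn).mul (lap_contOn hΩ hw)
    · exact (hw.continuousOn).mul (continuous_lap_ηη hη).continuousOn

lemma caccioppoli (hΩ : IsOpen Ω) {w η L : (Fin d → ℝ) → ℝ}
    (hw : ContDiffOn ℝ 2 w Ω) (hη : ContDiff ℝ ∞ η)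
    {K : Set (Fin d → ℝ)} (hK : IsCompact K) (hKΩ : K ⊆ Ω) (hts : tsupport η ⊆ K)
    (hL : ContinuousOn L Ω)
    (habs : ∀ x ∈ K, |lap' w x| ≤ lap' w x + 2 * L x)
    {δ : ℝ} (hδ0 : 0 ≤ δ) (hwδ : ∀ x ∈ K, |w x| ≤ δ) :
    ∫ x in K, (η x * η x) * ∑ i, (fderiv ℝ w x (Pi.single i 1))^2
      ≤ 2*δ*(δ*(∫ x in K, |lap' (fun z => η z * η z) x|)
          + ∫ x in K, 2*((η x * η x) * L x))
        + 4*δ^2*(∫ x in K, ∑ i, (fderiv ℝ η x (Pi.single i 1))^2) := by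
  have hKm : MeasurableSet K := hK.measurableSet
  -- continuity facts
  have cη : Continuous η := hη.continuous
  have cw : ContinuousOn w K := hw.continuousOn.mono hKΩ
  have cg : ∀ i : Fin d, ContinuousOn (fun x => fderiv ℝ w x (Pi.single i 1)) K :=
    fun i => ((pd_contDiffOn hΩ hw i).continuousOn).mono hKΩ
  have clw : ContinuousOn (lap' w) K := (lap_contOn hΩ hw).mono hKΩ
  have clηη : Continuous (lap' (fun z => η z * η z)) := continuous_lap_ηη hη
  have cdη : ∀ i : Fin d, Continuous (fun x => fderiv ℝ η x (Pi.single i 1)) :=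
    continuous_pdη hη
  have cL : ContinuousOn L K := hL.mono hKΩ
  have cS2 : ContinuousOn (fun x => ∑ i, (fderiv ℝ w x (Pi.single i 1))^2) K :=
    continuousOn_finset_sum _ fun i _ => (cg i).pow 2
  have cS3 : ContinuousOn (fun x => ∑ i, fderiv ℝ η x (Pi.single i 1)
      * fderiv ℝ w x (Pi.single i 1)) K :=
    continuousOn_finset_sum _ fun i _ => ((cdη i).continuousOn).mul (cg i)
  have cSdη : Continuous (fun x => ∑ i, (fderiv ℝ η x (Pi.single i 1))^2) :=
    continuous_finset_sum _ fun i _ => (cdη i).pow 2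
  -- integrability facts
  have int1 : IntegrableOn (fun x => (η x * η x) * (w x * lap' w x)) K :=
    (((cη.mul cη).continuousOn).mul (cw.mul clw)).integrableOn_compact hK
  have int2 : IntegrableOn (fun x => (η x * η x)
      * ∑ i, (fderiv ℝ w x (Pi.single i 1))^2) K :=
    (((cη.mul cη).continuousOn).mul cS2).integrableOn_compact hK
  have int3 : IntegrableOn (fun x => 2 * η x * w x * ∑ i, fderiv ℝ η x (Pi.single i 1)
      * fderiv ℝ w x (Pi.single i 1)) K :=
    ((((continuous_const.mul cη).continuousOn).mul cw).mul cS3).integrableOn_compact hK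
  have int5 : IntegrableOn (fun x => (η x * η x) * lap' w x) K :=
    (((cη.mul cη).continuousOn).mul clw).integrableOn_compact hK
  have int6 : IntegrableOn (fun x => w x * lap' (fun z => η z * η z) x) K :=
    (cw.mul clηη.continuousOn).integrableOn_compact hK
  have int7 : IntegrableOn (fun x => |lap' (fun z => η z * η z) x|) K :=
    (clηη.abs.continuousOn).integrableOn_compact hK
  have int8 : IntegrableOn (fun x => 2*((η x * η x) * L x)) K :=
    (continuousOn_const.mul (((cη.mul cη).continuousOn).mul cL)).integrableOn_compact hK
  have int9 : IntegrableOn (fun x => (η x * η x) * (lap' w x + 2 * L x)) K :=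
    (((cη.mul cη).continuousOn).mul (clw.add (continuousOn_const.mul cL))).integrableOn_compact hK
  have int10 : IntegrableOn (fun x => (w x * w x)
      * ∑ i, (fderiv ℝ η x (Pi.single i 1))^2) K :=
    ((cw.mul cw).mul cSdη.continuousOn).integrableOn_compact hK
  have intSdη : IntegrableOn (fun x => ∑ i, (fderiv ℝ η x (Pi.single i 1))^2) K :=
    (cSdη.continuousOn).integrableOn_compact hK
  -- step 1 : IB1 split
  have int23 : IntegrableOn (fun x => (η x * η x)
      * ∑ i, (fderiv ℝ w x (Pi.single i 1))^2
      + 2 * η x * w x * ∑ i, fderiv ℝ η x (Pi.single i 1)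
        * fderiv ℝ w x (Pi.single i 1)) K := int2.add int3
  have h0 := IB1 hΩ hw hη hK hKΩ hts
  rw [MeasureTheory.integral_add int1 int23,
    MeasureTheory.integral_add int2 int3] at h0
  -- step 2 : bound for the Laplacian term
  have h2 : -∫ x in K, (η x * η x) * (w x * lap' w x)
      ≤ δ * ((∫ x in K, w x * lap' (fun z => η z * η z) x)
          + ∫ x in K, 2*((η x * η x) * L x)) := by
    rw [← MeasureTheory.integral_neg]
    have step : ∫ x in K, -((η x * η x) * (w x * lap' w x))
        ≤ ∫ x in K, δ * ((η x * η x) * (lap' w x + 2 * L x)) := by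
      apply MeasureTheory.setIntegral_mono_on int1.neg (int9.const_mul δ) hKm
      intro x hx
      have hη2 : 0 ≤ η x * η x := mul_self_nonneg _
      have h1 : |w x| ≤ δ := hwδ x hx
      have h2 := habs x hx
      have h3 : |(η x * η x) * (w x * lap' w x)| ≤ (η x * η x) * (δ * |lap' w x|) := by
        rw [abs_mul, abs_of_nonneg hη2]
        apply mul_le_mul_of_nonneg_left _ hη2
        rw [abs_mul]
        exact mul_le_mul h1 le_rfl (abs_nonneg _) hδ0
      have h4 : (η x * η x) * (δ * |lap' w x|) ≤ δ * ((η x * η x) * (lap' w x + 2 * L x)) := by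
        have : 0 ≤ δ * (η x * η x) := mul_nonneg hδ0 hη2
        calc (η x * η x) * (δ * |lap' w x|) = δ * (η x * η x) * |lap' w x| := by ring
          _ ≤ δ * (η x * η x) * (lap' w x + 2 * L x) := by
              apply mul_le_mul_of_nonneg_left h2 this
          _ = δ * ((η x * η x) * (lap' w x + 2 * L x)) := by ring
      simp only [Pi.neg_apply]
      linarith [neg_abs_le ((η x * η x) * (w x * lap' w x)), abs_nonneg ((η x * η x) * (w x * lap' w x))]
    rw [MeasureTheory.integral_const_mul] at step
    have hIB2 := IB2 hΩ hw hη hK hKΩ hts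
    rw [MeasureTheory.integral_sub int5 int6, sub_eq_zero] at hIB2
    have heq : ∫ x in K, (η x * η x) * (lap' w x + 2 * L x)
        = (∫ x in K, w x * lap' (fun z => η z * η z) x) + ∫ x in K, 2*((η x * η x) * L x) := by
      have : ∀ x, (η x * η x) * (lap' w x + 2 * L x)
          = (η x * η x) * lap' w x + 2*((η x * η x) * L x) := fun x => by ring
      rw [show (fun x => (η x * η x) * (lap' w x + 2 * L x))
          = fun x => (η x * η x) * lap' w x + 2*((η x * η x) * L x) from funext this] at *
      rw [MeasureTheory.integral_add int5 int8, hIB2]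
    calc ∫ x in K, -((η x * η x) * (w x * lap' w x))
        ≤ δ * ∫ x in K, (η x * η x) * (lap' w x + 2 * L x) := step
      _ = δ * ((∫ x in K, w x * lap' (fun z => η z * η z) x)
          + ∫ x in K, 2*((η x * η x) * L x)) := by rw [heq]
  -- step 2b : bound ∫ w lap(η²) by δ M₁
  have h2b : ∫ x in K, w x * lap' (fun z => η z * η z) x
      ≤ δ * ∫ x in K, |lap' (fun z => η z * η z) x| := by
    rw [← MeasureTheory.integral_const_mul]
    apply MeasureTheory.setIntegral_mono_on int6 (int7.const_mul δ) hKm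
    intro x hx
    calc w x * lap' (fun z => η z * η z) x ≤ |w x * lap' (fun z => η z * η z) x| := le_abs_self _
      _ = |w x| * |lap' (fun z => η z * η z) x| := abs_mul _ _
      _ ≤ δ * |lap' (fun z => η z * η z) x| :=
          mul_le_mul_of_nonneg_right (hwδ x hx) (abs_nonneg _)
  -- step 3 : cross-term bound
  have h3 : -∫ x in K, 2 * η x * w x * ∑ i, fderiv ℝ η x (Pi.single i 1)
        * fderiv ℝ w x (Pi.single i 1)
      ≤ (1/2) * (∫ x in K, (η x * η x) * ∑ i, (fderiv ℝ w x (Pi.single i 1))^2)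
        + 2 * ∫ x in K, (w x * w x) * ∑ i, (fderiv ℝ η x (Pi.single i 1))^2 := by
    rw [← MeasureTheory.integral_neg, ← MeasureTheory.integral_const_mul,
      ← MeasureTheory.integral_const_mul,
      ← MeasureTheory.integral_add ((int2.const_mul (1/2))) ((int10.const_mul 2))]
    apply MeasureTheory.setIntegral_mono_on int3.neg
      ((int2.const_mul (1/2)).add (int10.const_mul 2)) hKm
    intro x hx
    have habs3 : |2 * η x * w x * ∑ i, fderiv ℝ η x (Pi.single i 1)
        * fderiv ℝ w x (Pi.single i 1)|
        ≤ (1/2) * ((η x * η x) * ∑ i, (fderiv ℝ w x (Pi.single i 1))^2)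
          + 2 * ((w x * w x) * ∑ i, (fderiv ℝ η x (Pi.single i 1))^2) := by
      rw [Finset.mul_sum]
      calc |∑ i, 2 * η x * w x * (fderiv ℝ η x (Pi.single i 1)
            * fderiv ℝ w x (Pi.single i 1))|
          ≤ ∑ i, |2 * η x * w x * (fderiv ℝ η x (Pi.single i 1)
            * fderiv ℝ w x (Pi.single i 1))| := Finset.abs_sum_le_sum_abs _ _
        _ ≤ ∑ i, ((1/2) * ((η x * η x) * (fderiv ℝ w x (Pi.single i 1))^2)
            + 2 * ((w x * w x) * (fderiv ℝ η x (Pi.single i 1))^2)) := by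
            apply Finset.sum_le_sum
            intro i _
            rw [abs_le]
            constructor <;>
              nlinarith [sq_nonneg (η x * fderiv ℝ w x (Pi.single i 1)
                  - 2 * (w x * fderiv ℝ η x (Pi.single i 1))),
                sq_nonneg (η x * fderiv ℝ w x (Pi.single i 1)
                  + 2 * (w x * fderiv ℝ η x (Pi.single i 1)))]
        _ = (1/2) * ((η x * η x) * ∑ i, (fderiv ℝ w x (Pi.single i 1))^2)
            + 2 * ((w x * w x) * ∑ i, (fderiv ℝ η x (Pi.single i 1))^2) := by
            rw [Finset.sum_add_distrib, ← Finset.mul_sum, ← Finset.mul_sum,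
              ← Finset.mul_sum, ← Finset.mul_sum]
    simp only [Pi.neg_apply, Pi.add_apply]
    linarith [neg_abs_le (2 * η x * w x * ∑ i, fderiv ℝ η x (Pi.single i 1)
      * fderiv ℝ w x (Pi.single i 1))]
  -- step 3b : w² ≤ δ²
  have h3b : ∫ x in K, (w x * w x) * ∑ i, (fderiv ℝ η x (Pi.single i 1))^2
      ≤ δ^2 * ∫ x in K, ∑ i, (fderiv ℝ η x (Pi.single i 1))^2 := by
    rw [← MeasureTheory.integral_const_mul]
    apply MeasureTheory.setIntegral_mono_on int10 (intSdη.const_mul _) hKm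
    intro x hx
    have h1 : w x * w x ≤ δ^2 := by
      have := hwδ x hx
      nlinarith [abs_nonneg (w x), sq_abs (w x), le_abs_self (w x), neg_abs_le (w x)]
    have h2 : 0 ≤ ∑ i, (fderiv ℝ η x (Pi.single i 1))^2 :=
      Finset.sum_nonneg fun i _ => sq_nonneg _
    exact mul_le_mul_of_nonneg_right h1 h2
  -- combine
  have hA := h2b
  nlinarith [h0, h2, h3, h3b, hδ0]

def pderiv'' {d : ℕ} (v : (Fin d → ℝ) → ℝ) (i : Fin d) (x : Fin d → ℝ) : ℝ :=
  fderiv ℝ v x (Pi.single i 1)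

theorem statement15' (d : ℕ) (Ω : Set (Fin d → ℝ)) (hΩ : IsOpen Ω)
    (u : (Fin d → ℝ) → ℝ) (uj : ℕ → (Fin d → ℝ) → ℝ)
    (hu : ContDiffOn ℝ 2 u Ω) (huj : ∀ j, ContDiffOn ℝ 2 (uj j) Ω)
    (hsub : ∀ x ∈ Ω, 0 ≤ lap' u x) (hsubj : ∀ j, ∀ x ∈ Ω, 0 ≤ lap' (uj j) x)
    (hconv : ∀ C : Set (Fin d → ℝ), IsCompact C → C ⊆ Ω →
      TendstoUniformlyOn (fun j => uj j) u atTop C) :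
    ∀ C : Set (Fin d → ℝ), IsCompact C → C ⊆ Ω →
      Tendsto (fun j => ∫ x in C, (uj j x - u x) ^ 2) atTop (𝓝 0) ∧
      Tendsto (fun j => ∫ x in C, ∑ i, (pderiv'' (uj j) i x - pderiv'' u i x) ^ 2)
        atTop (𝓝 0) := by
  intro C hC hCΩ
  constructor
  · -- L² convergence of functions
    rw [NormedAddCommGroup.tendsto_nhds_zero]
    intro ε hε
    set V : ℝ := (volume C).toReal with hVdef
    have hV : 0 ≤ V := ENNReal.toReal_nonneg
    set δ : ℝ := min 1 (ε / (2 * (V + 1))) with hδdef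
    have hδpos : 0 < δ := lt_min one_pos (div_pos hε (by linarith))
    have hδ1 : δ ≤ 1 := min_le_left _ _
    have hδ2 : δ ≤ ε / (2 * (V + 1)) := min_le_right _ _
    have hev := (Metric.tendstoUniformlyOn_iff.mp (hconv C hC hCΩ)) δ hδpos
    filter_upwards [hev] with j hj
    have hwδ : ∀ x ∈ C, |uj j x - u x| ≤ δ := by
      intro x hx
      have := hj x hx
      rw [Real.dist_eq, abs_sub_comm] at this
      exact this.le
    have hint : IntegrableOn (fun x => (uj j x - u x) ^ 2) C := by
      have hcw : ContinuousOn (fun x => uj j x - u x) C :=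
        (((huj j).sub hu).continuousOn).mono hCΩ
      exact (hcw.pow 2).integrableOn_compact hC
    have hnn : 0 ≤ ∫ x in C, (uj j x - u x) ^ 2 :=
      setIntegral_nonneg hC.measurableSet fun x _ => sq_nonneg _
    have hle : ∫ x in C, (uj j x - u x) ^ 2 ≤ δ * V := by
      have step : ∫ x in C, (uj j x - u x) ^ 2 ≤ ∫ _x in C, δ := by
        apply setIntegral_mono_on hint
          (integrableOn_const hC.measure_lt_top.ne) hC.measurableSet
        intro x hx
        have h1 := hwδ x hx
        nlinarith [abs_nonneg (uj j x - u x), sq_abs (uj j x - u x)]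
      rw [setIntegral_const, smul_eq_mul] at step
      calc ∫ x in C, (uj j x - u x) ^ 2 ≤ V * δ := step
        _ = δ * V := mul_comm _ _
    rw [Real.norm_eq_abs, abs_of_nonneg hnn]
    have : δ * V ≤ (ε / (2 * (V + 1))) * V :=
      mul_le_mul_of_nonneg_right hδ2 hV
    have hfin : (ε / (2 * (V + 1))) * V < ε := by
      rw [div_mul_eq_mul_div, div_lt_iff₀ (by linarith)]
      nlinarith
    linarith
  · -- gradient L² convergence
    obtain ⟨K, hKcomp, hCK, hKΩ⟩ := exists_compact_between hC hΩ hCΩ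
    have hCK' : C ⊆ K := hCK.trans interior_subset
    have hd : Disjoint ((interior K)ᶜ) C :=
      Set.disjoint_left.mpr fun x hx hxc => hx (hCK hxc)
    obtain ⟨f, hf0, hf1, hf01⟩ := exists_contMDiffMap_zero_one_of_isClosed (n := (⊤ : ℕ∞))
      (modelWithCornersSelf ℝ (Fin d → ℝ)) isOpen_interior.isClosed_compl
      hC.isClosed hd
    set η : (Fin d → ℝ) → ℝ := ⇑f with hηdef
    have hη : ContDiff ℝ ∞ η := f.contMDiff.contDiff
    have hts : tsupport η ⊆ K := by
      have hsupp : Function.support η ⊆ interior K := by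
        intro x hx
        by_contra hmem
        exact hx (hf0 hmem)
      exact (closure_mono hsupp).trans (closure_minimal interior_subset hKcomp.isClosed)
    have hKm : MeasurableSet K := hKcomp.measurableSet
    -- constants
    set M₁ : ℝ := ∫ x in K, |lap' (fun z => η z * η z) x| with hM₁def
    set A₀ : ℝ := ∫ x in K, 2*((η x * η x) * lap' u x) with hA₀def
    set M₂ : ℝ := ∫ x in K, ∑ i, (fderiv ℝ η x (Pi.single i 1))^2 with hM₂def
    have hM₁ : 0 ≤ M₁ := setIntegral_nonneg hKm fun x _ => abs_nonneg _
    have hA₀ : 0 ≤ A₀ := setIntegral_nonneg hKm fun x hx => by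
      have h1 := hsub x (hKΩ hx)
      have h2 : 0 ≤ η x * η x := mul_self_nonneg _
      nlinarith
    have hM₂ : 0 ≤ M₂ := setIntegral_nonneg hKm fun x _ =>
      Finset.sum_nonneg fun i _ => sq_nonneg _
    set M : ℝ := 2*(M₁ + A₀) + 4*M₂ with hMdef
    have hM : 0 ≤ M := by positivity
    rw [NormedAddCommGroup.tendsto_nhds_zero]
    intro ε hε
    set δ : ℝ := min 1 (ε / (2 * (M + 1))) with hδdef
    have hδpos : 0 < δ := lt_min one_pos (div_pos hε (by linarith))
    have hδ1 : δ ≤ 1 := min_le_left _ _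
    have hδ2 : δ ≤ ε / (2 * (M + 1)) := min_le_right _ _
    have hev := (Metric.tendstoUniformlyOn_iff.mp (hconv K hKcomp hKΩ)) δ hδpos
    filter_upwards [hev] with j hj
    show ‖∫ x in C, ∑ i, (pderiv'' (uj j) i x - pderiv'' u i x) ^ 2‖ < ε
    set w : (Fin d → ℝ) → ℝ := fun x => uj j x - u x with hwdef
    have hw : ContDiffOn ℝ 2 w Ω := (huj j).sub hu
    have hwδ : ∀ x ∈ K, |w x| ≤ δ := by
      intro x hx
      have := hj x hx
      rw [Real.dist_eq, abs_sub_comm] at this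
      exact this.le
    have habs : ∀ x ∈ K, |lap' w x| ≤ lap' w x + 2 * lap' u x := by
      intro x hx
      have heq : lap' w x = lap' (uj j) x - lap' u x := lap_sub hΩ (huj j) hu (hKΩ hx)
      rw [heq, abs_le]
      constructor <;> linarith [hsubj j x (hKΩ hx), hsub x (hKΩ hx)]
    have hcac := caccioppoli hΩ hw hη hKcomp hKΩ hts (lap_contOn hΩ hu) habs
      hδpos.le hwδ
    -- identify the integrand on C
    have hPeq : ∫ x in C, ∑ i, (pderiv'' (uj j) i x - pderiv'' u i x) ^ 2
        = ∫ x in C, (η x * η x) * ∑ i, (fderiv ℝ w x (Pi.single i 1))^2 := by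
      apply setIntegral_congr_fun hC.measurableSet
      intro x hx
      have hη1 : η x = 1 := hf1 hx
      have hsum : ∀ i : Fin d, pderiv'' (uj j) i x - pderiv'' u i x
          = fderiv ℝ w x (Pi.single i 1) := by
        intro i
        have : fderiv ℝ w x = fderiv ℝ (uj j) x - fderiv ℝ u x :=
          fderiv_sub (v_diffAt hΩ (huj j) (hCΩ hx)) (v_diffAt hΩ hu (hCΩ hx))
        rw [this]
        simp [pderiv'']
      simp only [hη1, hsum]
      ring
    have hintK : IntegrableOn (fun x => (η x * η x)
        * ∑ i, (fderiv ℝ w x (Pi.single i 1))^2) K := by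
      apply ContinuousOn.integrableOn_compact hKcomp
      exact ((hη.continuous.mul hη.continuous).continuousOn).mul
        (continuousOn_finset_sum _ fun i _ =>
          (((pd_contDiffOn hΩ hw i).continuousOn).mono hKΩ).pow 2)
    have hmono : ∫ x in C, (η x * η x) * ∑ i, (fderiv ℝ w x (Pi.single i 1))^2
        ≤ ∫ x in K, (η x * η x) * ∑ i, (fderiv ℝ w x (Pi.single i 1))^2 := by
      apply setIntegral_mono_set hintK
      · exact Filter.Eventually.of_forall fun x =>
          mul_nonneg (mul_self_nonneg _) (Finset.sum_nonneg fun i _ => sq_nonneg _)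
      · exact hCK'.eventuallyLE
    have hnn : 0 ≤ ∫ x in C, ∑ i, (pderiv'' (uj j) i x - pderiv'' u i x) ^ 2 :=
      setIntegral_nonneg hC.measurableSet fun x _ =>
        Finset.sum_nonneg fun i _ => sq_nonneg _
    rw [Real.norm_eq_abs, abs_of_nonneg hnn]
    have hchain : ∫ x in C, ∑ i, (pderiv'' (uj j) i x - pderiv'' u i x) ^ 2
        ≤ 2*δ*(δ*M₁ + A₀) + 4*δ^2*M₂ := by
      rw [hPeq]
      calc ∫ x in C, (η x * η x) * ∑ i, (fderiv ℝ w x (Pi.single i 1))^2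
          ≤ ∫ x in K, (η x * η x) * ∑ i, (fderiv ℝ w x (Pi.single i 1))^2 := hmono
        _ ≤ 2*δ*(δ*M₁ + A₀) + 4*δ^2*M₂ := hcac
    have hδM : 2*δ*(δ*M₁ + A₀) + 4*δ^2*M₂ ≤ δ * M := by
      rw [hMdef]
      nlinarith [mul_nonneg hδpos.le hM₁, mul_nonneg hδpos.le hM₂,
        mul_nonneg hδpos.le hA₀]
    have : δ * M ≤ (ε / (2 * (M + 1))) * M := mul_le_mul_of_nonneg_right hδ2 hM
    have hfin : (ε / (2 * (M + 1))) * M < ε := by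
      rw [div_mul_eq_mul_div, div_lt_iff₀ (by linarith)]
      nlinarith
    exact lt_of_le_of_lt (hchain.trans (hδM.trans this)) hfin

end Helpers

theorem statement15 (Ω : Set (Fin m → ℝ)) (hΩ : IsOpen Ω)
    (u : (Fin m → ℝ) → ℝ) (uj : ℕ → (Fin m → ℝ) → ℝ)
    (hu : ContDiffOn ℝ 2 u Ω) (huj : ∀ j, ContDiffOn ℝ 2 (uj j) Ω)
    (hsub : ∀ x ∈ Ω, 0 ≤ lap m u x) (hsubj : ∀ j, ∀ x ∈ Ω, 0 ≤ lap m (uj j) x)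
    (hconv : ∀ C : Set (Fin m → ℝ), IsCompact C → C ⊆ Ω →
      TendstoUniformlyOn (fun j => uj j) u atTop C) :
    ∀ C : Set (Fin m → ℝ), IsCompact C → C ⊆ Ω →
      Tendsto (fun j => ∫ x in C, (uj j x - u x) ^ 2) atTop (𝓝 0) ∧
      Tendsto (fun j => ∫ x in C, ∑ i, (pderiv m (uj j) i x - pderiv m u i x) ^ 2)
        atTop (𝓝 0) := by
  intro C hC hCΩ
  exact statement15' m Ω hΩ u uj hu huj hsub hsubj hconv C hC hCΩ
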